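/- Both strong bisimilarity ∼ and weak bisimilarity ≈ of Petri calculus terms are congruences with respect to ';' and '⊗': for ⋈ ∈ {∼, ≈}, if P ⋈ Q then for any term R of appropriate sort, P;R ⋈ Q;R, R;P ⋈ R;Q, P⊗R ⋈ Q⊗R and R⊗P ⋈ R⊗Q. -/

import Mathlib

/-- Syntax of the Petri calculus. -/
inductive PTerm : Type
  | empty               -- ○ (empty one-place buffer)
  | full                -- ● (full one-place buffer)
  | iden                -- I
  | tw                  -- X
  | diag                -- Δ
  | codiag              -- ∇
  | bot                 -- ⊥
  | top                 -- ⊤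
  | lam                 -- Λ
  | vee                 -- V
  | down                -- ↓
  | up                  -- ↑
  | tens (P Q : PTerm)  -- ⊗
  | seq (P Q : PTerm)   -- ;
  deriving DecidableEq

namespace PTerm

/-- Sorting discipline of the Petri calculus. -/
inductive HasSort : PTerm → ℕ → ℕ → Prop
  | empty : HasSort .empty 1 1
  | full : HasSort .full 1 1
  | iden : HasSort .iden 1 1
  | tw : HasSort .tw 2 2
  | diag : HasSort .diag 1 2
  | codiag : HasSort .codiag 2 1
  | bot : HasSort .bot 1 0
  | top : HasSort .top 0 1
  | lam : HasSort .lam 1 2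
  | vee : HasSort .vee 2 1
  | down : HasSort .down 1 0
  | up : HasSort .up 0 1
  | tens {P Q : PTerm} {k l m n : ℕ} :
      HasSort P k l → HasSort Q m n → HasSort (.tens P Q) (k + m) (l + n)
  | seq {P Q : PTerm} {k n l : ℕ} :
      HasSort P k n → HasSort Q n l → HasSort (.seq P Q) k l

/-- Basic connectors are the constants of the calculus. -/
def IsBasic : PTerm → Prop
  | .tens _ _ => False
  | .seq _ _ => False
  | _ => True

/-- Stateless terms contain no buffers ○, ●. -/
def Stateless : PTerm → Prop
  | .empty => False
  | .full => False
  | .tens P Q => Stateless P ∧ Stateless Q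
  | .seq P Q => Stateless P ∧ Stateless Q
  | _ => True

/-- Strong operational semantics of the Petri calculus.  Labels are words
over ℕ (the rules only produce entries in {0,1}). -/
inductive Step : PTerm → List ℕ → List ℕ → PTerm → Prop
  | tkI : Step .empty [1] [0] .full
  | tkO : Step .full [0] [1] .empty
  | iden : Step .iden [1] [1] .iden
  | tw {a b : ℕ} : a ≤ 1 → b ≤ 1 → Step .tw [a, b] [b, a] .tw
  | bot : Step .bot [1] [] .bot
  | top : Step .top [] [1] .top
  | diag : Step .diag [1] [1, 1] .diag
  | codiag : Step .codiag [1, 1] [1] .codiag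
  | lam {a : ℕ} : a ≤ 1 → Step .lam [1] [1 - a, a] .lam
  | vee {a : ℕ} : a ≤ 1 → Step .vee [1 - a, a] [1] .vee
  | refl {C : PTerm} {k l : ℕ} : IsBasic C → HasSort C k l →
      Step C (List.replicate k 0) (List.replicate l 0) C
  | cut {P Q R S : PTerm} {α β γ : List ℕ} :
      Step P α γ Q → Step R γ β S → Step (.seq P R) α β (.seq Q S)
  | ten {P Q R S : PTerm} {α₁ α₂ β₁ β₂ : List ℕ} :
      Step P α₁ β₁ Q → Step R α₂ β₂ S →
      Step (.tens P R) (α₁ ++ α₂) (β₁ ++ β₂) (.tens Q S)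

/-- Weak operational semantics of the Petri calculus: the same rules plus the
rule (Weak) composing consecutive steps by pointwise addition of labels. -/
inductive Weak : PTerm → List ℕ → List ℕ → PTerm → Prop
  | tkI : Weak .empty [1] [0] .full
  | tkO : Weak .full [0] [1] .empty
  | iden : Weak .iden [1] [1] .iden
  | tw {a b : ℕ} : a ≤ 1 → b ≤ 1 → Weak .tw [a, b] [b, a] .tw
  | bot : Weak .bot [1] [] .bot
  | top : Weak .top [] [1] .top
  | diag : Weak .diag [1] [1, 1] .diag
  | codiag : Weak .codiag [1, 1] [1] .codiag
  | lam {a : ℕ} : a ≤ 1 → Weak .lam [1] [1 - a, a] .lam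
  | vee {a : ℕ} : a ≤ 1 → Weak .vee [1 - a, a] [1] .vee
  | refl {C : PTerm} {k l : ℕ} : IsBasic C → HasSort C k l →
      Weak C (List.replicate k 0) (List.replicate l 0) C
  | cut {P Q R S : PTerm} {α β γ : List ℕ} :
      Weak P α γ Q → Weak R γ β S → Weak (.seq P R) α β (.seq Q S)
  | ten {P Q R S : PTerm} {α₁ α₂ β₁ β₂ : List ℕ} :
      Weak P α₁ β₁ Q → Weak R α₂ β₂ S →
      Weak (.tens P R) (α₁ ++ α₂) (β₁ ++ β₂) (.tens Q S)
  | weak {P R Q : PTerm} {α₁ α₂ β₁ β₂ : List ℕ} :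
      Weak P α₁ β₁ R → Weak R α₂ β₂ Q →
      Weak P (List.zipWith (· + ·) α₁ α₂) (List.zipWith (· + ·) β₁ β₂) Q

end PTerm
/-- A bisimulation for a two-labelled transition system. -/
def IsBisimulation {S : Type*} {L : Type*} (tr : S → L → S → Prop)
    (R : S → S → Prop) : Prop :=
  ∀ p q, R p q →
    (∀ a p', tr p a p' → ∃ q', tr q a q' ∧ R p' q') ∧
    (∀ a q', tr q a q' → ∃ p', tr p a p' ∧ R p' q')

/-- Bisimilarity: two states are bisimilar when some bisimulation relates them. -/
def Bisimilar {S : Type*} {L : Type*} (tr : S → L → S → Prop) (p q : S) : Prop :=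
  ∃ R, IsBisimulation tr R ∧ R p q
/-- Strong transition relation of the Petri calculus, packaged with paired labels. -/
def pcStrongTr : PTerm → List ℕ × List ℕ → PTerm → Prop :=
  fun P a Q => PTerm.Step P a.1 a.2 Q

/-- Weak transition relation of the Petri calculus, packaged with paired labels. -/
def pcWeakTr : PTerm → List ℕ × List ℕ → PTerm → Prop :=
  fun P a Q => PTerm.Weak P a.1 a.2 Q

/-- Strong bisimilarity `∼` of Petri calculus terms. -/
def SBisim (P Q : PTerm) : Prop := Bisimilar pcStrongTr P Q

/-- Weak bisimilarity `≈` of Petri calculus terms. -/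
def WBisim (P Q : PTerm) : Prop := Bisimilar pcWeakTr P Q

namespace Stmt10Aux

open PTerm

/-- Sorts are unique. -/
lemma sort_unique {P : PTerm} {k l k' l' : ℕ}
    (h1 : PTerm.HasSort P k l) (h2 : PTerm.HasSort P k' l') : k = k' ∧ l = l' := by
  induction h1 generalizing k' l' with
  | tens hP hQ ihP ihQ =>
    cases h2 with
    | tens hP' hQ' =>
      obtain ⟨e1, e2⟩ := ihP hP'
      obtain ⟨e3, e4⟩ := ihQ hQ'
      omega
  | seq hP hQ ihP ihQ =>
    cases h2 with
    | seq hP' hQ' =>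
      obtain ⟨e1, e2⟩ := ihP hP'
      subst e2
      obtain ⟨e3, e4⟩ := ihQ hQ'
      exact ⟨e1, e4⟩
  | empty => cases h2; exact ⟨rfl, rfl⟩
  | full => cases h2; exact ⟨rfl, rfl⟩
  | iden => cases h2; exact ⟨rfl, rfl⟩
  | tw => cases h2; exact ⟨rfl, rfl⟩
  | diag => cases h2; exact ⟨rfl, rfl⟩
  | codiag => cases h2; exact ⟨rfl, rfl⟩
  | bot => cases h2; exact ⟨rfl, rfl⟩
  | top => cases h2; exact ⟨rfl, rfl⟩
  | lam => cases h2; exact ⟨rfl, rfl⟩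
  | vee => cases h2; exact ⟨rfl, rfl⟩
  | down => cases h2; exact ⟨rfl, rfl⟩
  | up => cases h2; exact ⟨rfl, rfl⟩

/-- Strong steps respect sorts. -/
lemma step_sort {P Q : PTerm} {α β : List ℕ} {k l : ℕ}
    (h : PTerm.Step P α β Q) (hs : PTerm.HasSort P k l) :
    α.length = k ∧ β.length = l ∧ PTerm.HasSort Q k l := by
  induction h generalizing k l with
  | tkI => cases hs; exact ⟨rfl, rfl, .full⟩
  | tkO => cases hs; exact ⟨rfl, rfl, .empty⟩
  | iden => cases hs; exact ⟨rfl, rfl, .iden⟩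
  | tw _ _ => cases hs; exact ⟨rfl, rfl, .tw⟩
  | bot => cases hs; exact ⟨rfl, rfl, .bot⟩
  | top => cases hs; exact ⟨rfl, rfl, .top⟩
  | diag => cases hs; exact ⟨rfl, rfl, .diag⟩
  | codiag => cases hs; exact ⟨rfl, rfl, .codiag⟩
  | lam _ => cases hs; exact ⟨rfl, rfl, .lam⟩
  | vee _ => cases hs; exact ⟨rfl, rfl, .vee⟩
  | refl hb hC =>
    obtain ⟨rfl, rfl⟩ := sort_unique hC hs
    exact ⟨by simp, by simp, hC⟩
  | cut h1 h2 ih1 ih2 =>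
    cases hs with
    | seq hP hR =>
      obtain ⟨ha, hg, hQ⟩ := ih1 hP
      obtain ⟨_, hb, hS⟩ := ih2 hR
      exact ⟨ha, hb, .seq hQ hS⟩
  | ten h1 h2 ih1 ih2 =>
    cases hs with
    | tens hP hR =>
      obtain ⟨ha1, hb1, hQ⟩ := ih1 hP
      obtain ⟨ha2, hb2, hS⟩ := ih2 hR
      refine ⟨?_, ?_, .tens hQ hS⟩ <;> simp [ha1, hb1, ha2, hb2]

/-- Weak steps respect sorts. -/
lemma weak_sort {P Q : PTerm} {α β : List ℕ} {k l : ℕ}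
    (h : PTerm.Weak P α β Q) (hs : PTerm.HasSort P k l) :
    α.length = k ∧ β.length = l ∧ PTerm.HasSort Q k l := by
  induction h generalizing k l with
  | tkI => cases hs; exact ⟨rfl, rfl, .full⟩
  | tkO => cases hs; exact ⟨rfl, rfl, .empty⟩
  | iden => cases hs; exact ⟨rfl, rfl, .iden⟩
  | tw _ _ => cases hs; exact ⟨rfl, rfl, .tw⟩
  | bot => cases hs; exact ⟨rfl, rfl, .bot⟩
  | top => cases hs; exact ⟨rfl, rfl, .top⟩
  | diag => cases hs; exact ⟨rfl, rfl, .diag⟩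
  | codiag => cases hs; exact ⟨rfl, rfl, .codiag⟩
  | lam _ => cases hs; exact ⟨rfl, rfl, .lam⟩
  | vee _ => cases hs; exact ⟨rfl, rfl, .vee⟩
  | refl hb hC =>
    obtain ⟨rfl, rfl⟩ := sort_unique hC hs
    exact ⟨by simp, by simp, hC⟩
  | cut h1 h2 ih1 ih2 =>
    cases hs with
    | seq hP hR =>
      obtain ⟨ha, hg, hQ⟩ := ih1 hP
      obtain ⟨_, hb, hS⟩ := ih2 hR
      exact ⟨ha, hb, .seq hQ hS⟩
  | ten h1 h2 ih1 ih2 =>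
    cases hs with
    | tens hP hR =>
      obtain ⟨ha1, hb1, hQ⟩ := ih1 hP
      obtain ⟨ha2, hb2, hS⟩ := ih2 hR
      refine ⟨?_, ?_, .tens hQ hS⟩ <;> simp [ha1, hb1, ha2, hb2]
  | weak h1 h2 ih1 ih2 =>
    obtain ⟨ha1, hb1, hR⟩ := ih1 hs
    obtain ⟨ha2, hb2, hQ⟩ := ih2 hR
    refine ⟨?_, ?_, hQ⟩ <;> simp [List.length_zipWith, ha1, ha2, hb1, hb2]

/-- Inversion of weak transitions from a sequential composition. -/
lemma weak_seq_inv : ∀ {X : PTerm} {α β : List ℕ} {T : PTerm},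
    PTerm.Weak X α β T → ∀ P R : PTerm, X = PTerm.seq P R →
    ∃ (Q S : PTerm) (γ : List ℕ), T = PTerm.seq Q S ∧
      PTerm.Weak P α γ Q ∧ PTerm.Weak R γ β S := by
  intro X α β T h
  induction h with
  | cut h1 h2 _ _ =>
    intro P R he
    injection he with e1 e2
    subst e1; subst e2
    exact ⟨_, _, _, rfl, h1, h2⟩
  | weak h1 h2 ih1 ih2 =>
    intro P R he
    obtain ⟨Q1, S1, γ1, rfl, hp1, hr1⟩ := ih1 P R he
    obtain ⟨Q2, S2, γ2, rfl, hp2, hr2⟩ := ih2 Q1 S1 rfl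
    exact ⟨Q2, S2, List.zipWith (· + ·) γ1 γ2, rfl, .weak hp1 hp2, .weak hr1 hr2⟩
  | refl hb _ => intro P R he; subst he; exact hb.elim
  | tkI => intro P R he; simp at he
  | tkO => intro P R he; simp at he
  | iden => intro P R he; simp at he
  | tw _ _ => intro P R he; simp at he
  | bot => intro P R he; simp at he
  | top => intro P R he; simp at he
  | diag => intro P R he; simp at he
  | codiag => intro P R he; simp at he
  | lam _ => intro P R he; simp at he
  | vee _ => intro P R he; simp at he
  | ten _ _ _ _ => intro P R he; simp at he

/-- Inversion of weak transitions from a tensor, for sorted components. -/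
lemma weak_tens_inv : ∀ {X : PTerm} {α β : List ℕ} {T : PTerm},
    PTerm.Weak X α β T → ∀ (P R : PTerm) (k l m n : ℕ), X = PTerm.tens P R →
    PTerm.HasSort P k l → PTerm.HasSort R m n →
    ∃ (Q S : PTerm) (α₁ α₂ β₁ β₂ : List ℕ), T = PTerm.tens Q S ∧
      α = α₁ ++ α₂ ∧ β = β₁ ++ β₂ ∧ PTerm.Weak P α₁ β₁ Q ∧ PTerm.Weak R α₂ β₂ S := by
  intro X α β T h
  induction h with
  | ten h1 h2 _ _ =>
    intro P R k l m n he hsP hsR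
    injection he with e1 e2
    subst e1; subst e2
    exact ⟨_, _, _, _, _, _, rfl, rfl, rfl, h1, h2⟩
  | weak h1 h2 ih1 ih2 =>
    intro P R k l m n he hsP hsR
    obtain ⟨Q1, S1, a1, a2, b1, b2, rfl, rfl, rfl, hp1, hr1⟩ :=
      ih1 P R k l m n he hsP hsR
    obtain ⟨la1, lb1, hQ1⟩ := weak_sort hp1 hsP
    obtain ⟨la2, lb2, hS1⟩ := weak_sort hr1 hsR
    obtain ⟨Q2, S2, a1', a2', b1', b2', rfl, rfl, rfl, hp2, hr2⟩ :=
      ih2 Q1 S1 k l m n rfl hQ1 hS1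
    obtain ⟨la1', lb1', _⟩ := weak_sort hp2 hQ1
    obtain ⟨la2', lb2', _⟩ := weak_sort hr2 hS1
    refine ⟨Q2, S2, _, _, _, _, rfl, ?_, ?_, .weak hp1 hp2, .weak hr1 hr2⟩
    · rw [List.zipWith_append (by omega)]
    · rw [List.zipWith_append (by omega)]
  | refl hb _ => intro P R k l m n he; subst he; exact hb.elim
  | tkI => intro P R k l m n he; simp at he
  | tkO => intro P R k l m n he; simp at he
  | iden => intro P R k l m n he; simp at he
  | tw _ _ => intro P R k l m n he; simp at he
  | bot => intro P R k l m n he; simp at he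
  | top => intro P R k l m n he; simp at he
  | diag => intro P R k l m n he; simp at he
  | codiag => intro P R k l m n he; simp at he
  | lam _ => intro P R k l m n he; simp at he
  | vee _ => intro P R k l m n he; simp at he
  | cut _ _ _ _ => intro P R k l m n he; simp at he

end Stmt10Aux

namespace Stmt10Aux

lemma toS {P : PTerm} {a b : List Nat} {Q : PTerm} (h : PTerm.Step P a b Q) :
    pcStrongTr P (a, b) Q := h
lemma ofS {P : PTerm} {a b : List Nat} {Q : PTerm} (h : pcStrongTr P (a, b) Q) :
    PTerm.Step P a b Q := h
lemma toW {P : PTerm} {a b : List Nat} {Q : PTerm} (h : PTerm.Weak P a b Q) :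
    pcWeakTr P (a, b) Q := h
lemma ofW {P : PTerm} {a b : List Nat} {Q : PTerm} (h : pcWeakTr P (a, b) Q) :
    PTerm.Weak P a b Q := h

lemma sb_seq_right {P Q : PTerm} (h : SBisim P Q) (R : PTerm) :
    SBisim (.seq P R) (.seq Q R) := by
  obtain ⟨S, hS, hPQ⟩ := h
  refine ⟨fun X Y => ∃ p q r, S p q ∧ X = .seq p r ∧ Y = .seq q r, ?_,
    ⟨P, Q, R, hPQ, rfl, rfl⟩⟩
  rintro X Y ⟨p, q, r, hpq, rfl, rfl⟩
  constructor
  · rintro ⟨α, β⟩ X' hstep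
    cases hstep with
    | refl hb _ => exact hb.elim
    | cut h1 h2 =>
      obtain ⟨q', hq', hpq'⟩ := (hS p q hpq).1 (_, _) _ (Stmt10Aux.toS h1)
      exact ⟨_, PTerm.Step.cut (Stmt10Aux.ofS hq') h2, _, _, _, hpq', rfl, rfl⟩
  · rintro ⟨α, β⟩ Y' hstep
    cases hstep with
    | refl hb _ => exact hb.elim
    | cut h1 h2 =>
      obtain ⟨p', hp', hpq'⟩ := (hS p q hpq).2 (_, _) _ (Stmt10Aux.toS h1)
      exact ⟨_, PTerm.Step.cut (Stmt10Aux.ofS hp') h2, _, _, _, hpq', rfl, rfl⟩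

lemma sb_seq_left {P Q : PTerm} (h : SBisim P Q) (R : PTerm) :
    SBisim (.seq R P) (.seq R Q) := by
  obtain ⟨S, hS, hPQ⟩ := h
  refine ⟨fun X Y => ∃ r p q, S p q ∧ X = .seq r p ∧ Y = .seq r q, ?_,
    ⟨R, P, Q, hPQ, rfl, rfl⟩⟩
  rintro X Y ⟨r, p, q, hpq, rfl, rfl⟩
  constructor
  · rintro ⟨α, β⟩ X' hstep
    cases hstep with
    | refl hb _ => exact hb.elim
    | cut h1 h2 =>
      obtain ⟨q', hq', hpq'⟩ := (hS p q hpq).1 (_, _) _ (Stmt10Aux.toS h2)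
      exact ⟨_, PTerm.Step.cut h1 (Stmt10Aux.ofS hq'), _, _, _, hpq', rfl, rfl⟩
  · rintro ⟨α, β⟩ Y' hstep
    cases hstep with
    | refl hb _ => exact hb.elim
    | cut h1 h2 =>
      obtain ⟨p', hp', hpq'⟩ := (hS p q hpq).2 (_, _) _ (Stmt10Aux.toS h2)
      exact ⟨_, PTerm.Step.cut h1 (Stmt10Aux.ofS hp'), _, _, _, hpq', rfl, rfl⟩

lemma sb_tens_right {P Q : PTerm} (h : SBisim P Q) (R : PTerm) :
    SBisim (.tens P R) (.tens Q R) := by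
  obtain ⟨S, hS, hPQ⟩ := h
  refine ⟨fun X Y => ∃ p q r, S p q ∧ X = .tens p r ∧ Y = .tens q r, ?_,
    ⟨P, Q, R, hPQ, rfl, rfl⟩⟩
  rintro X Y ⟨p, q, r, hpq, rfl, rfl⟩
  constructor
  · rintro ⟨α, β⟩ X' hstep
    cases hstep with
    | refl hb _ => exact hb.elim
    | ten h1 h2 =>
      obtain ⟨q', hq', hpq'⟩ := (hS p q hpq).1 (_, _) _ (Stmt10Aux.toS h1)
      exact ⟨_, PTerm.Step.ten (Stmt10Aux.ofS hq') h2, _, _, _, hpq', rfl, rfl⟩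
  · rintro ⟨α, β⟩ Y' hstep
    cases hstep with
    | refl hb _ => exact hb.elim
    | ten h1 h2 =>
      obtain ⟨p', hp', hpq'⟩ := (hS p q hpq).2 (_, _) _ (Stmt10Aux.toS h1)
      exact ⟨_, PTerm.Step.ten (Stmt10Aux.ofS hp') h2, _, _, _, hpq', rfl, rfl⟩

lemma sb_tens_left {P Q : PTerm} (h : SBisim P Q) (R : PTerm) :
    SBisim (.tens R P) (.tens R Q) := by
  obtain ⟨S, hS, hPQ⟩ := h
  refine ⟨fun X Y => ∃ r p q, S p q ∧ X = .tens r p ∧ Y = .tens r q, ?_,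
    ⟨R, P, Q, hPQ, rfl, rfl⟩⟩
  rintro X Y ⟨r, p, q, hpq, rfl, rfl⟩
  constructor
  · rintro ⟨α, β⟩ X' hstep
    cases hstep with
    | refl hb _ => exact hb.elim
    | ten h1 h2 =>
      obtain ⟨q', hq', hpq'⟩ := (hS p q hpq).1 (_, _) _ (Stmt10Aux.toS h2)
      exact ⟨_, PTerm.Step.ten h1 (Stmt10Aux.ofS hq'), _, _, _, hpq', rfl, rfl⟩
  · rintro ⟨α, β⟩ Y' hstep
    cases hstep with
    | refl hb _ => exact hb.elim
    | ten h1 h2 =>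
      obtain ⟨p', hp', hpq'⟩ := (hS p q hpq).2 (_, _) _ (Stmt10Aux.toS h2)
      exact ⟨_, PTerm.Step.ten h1 (Stmt10Aux.ofS hp'), _, _, _, hpq', rfl, rfl⟩

lemma wb_seq_right {P Q : PTerm} (h : WBisim P Q) (R : PTerm) :
    WBisim (.seq P R) (.seq Q R) := by
  obtain ⟨S, hS, hPQ⟩ := h
  refine ⟨fun X Y => ∃ p q r, S p q ∧ X = .seq p r ∧ Y = .seq q r, ?_,
    ⟨P, Q, R, hPQ, rfl, rfl⟩⟩
  rintro X Y ⟨p, q, r, hpq, rfl, rfl⟩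
  constructor
  · rintro ⟨α, β⟩ X' hstep
    obtain ⟨p', r', γ, rfl, h1, h2⟩ := weak_seq_inv hstep p r rfl
    obtain ⟨q', hq', hpq'⟩ := (hS p q hpq).1 (_, _) _ (Stmt10Aux.toW h1)
    exact ⟨_, PTerm.Weak.cut (Stmt10Aux.ofW hq') h2, _, _, _, hpq', rfl, rfl⟩
  · rintro ⟨α, β⟩ Y' hstep
    obtain ⟨q', r', γ, rfl, h1, h2⟩ := weak_seq_inv hstep q r rfl
    obtain ⟨p', hp', hpq'⟩ := (hS p q hpq).2 (_, _) _ (Stmt10Aux.toW h1)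
    exact ⟨_, PTerm.Weak.cut (Stmt10Aux.ofW hp') h2, _, _, _, hpq', rfl, rfl⟩

lemma wb_seq_left {P Q : PTerm} (h : WBisim P Q) (R : PTerm) :
    WBisim (.seq R P) (.seq R Q) := by
  obtain ⟨S, hS, hPQ⟩ := h
  refine ⟨fun X Y => ∃ r p q, S p q ∧ X = .seq r p ∧ Y = .seq r q, ?_,
    ⟨R, P, Q, hPQ, rfl, rfl⟩⟩
  rintro X Y ⟨r, p, q, hpq, rfl, rfl⟩
  constructor
  · rintro ⟨α, β⟩ X' hstep
    obtain ⟨r', p', γ, rfl, h1, h2⟩ := weak_seq_inv hstep r p rfl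
    obtain ⟨q', hq', hpq'⟩ := (hS p q hpq).1 (_, _) _ (Stmt10Aux.toW h2)
    exact ⟨_, PTerm.Weak.cut h1 (Stmt10Aux.ofW hq'), _, _, _, hpq', rfl, rfl⟩
  · rintro ⟨α, β⟩ Y' hstep
    obtain ⟨r', q', γ, rfl, h1, h2⟩ := weak_seq_inv hstep r q rfl
    obtain ⟨p', hp', hpq'⟩ := (hS p q hpq).2 (_, _) _ (Stmt10Aux.toW h2)
    exact ⟨_, PTerm.Weak.cut h1 (Stmt10Aux.ofW hp'), _, _, _, hpq', rfl, rfl⟩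

lemma wb_tens_right {P Q : PTerm} {k l : ℕ}
    (hsP : PTerm.HasSort P k l) (hsQ : PTerm.HasSort Q k l)
    (h : WBisim P Q) (R : PTerm) {m n : ℕ} (hsR : PTerm.HasSort R m n) :
    WBisim (.tens P R) (.tens Q R) := by
  obtain ⟨S, hS, hPQ⟩ := h
  refine ⟨fun X Y => ∃ p q r, S p q ∧ PTerm.HasSort p k l ∧ PTerm.HasSort q k l ∧
      PTerm.HasSort r m n ∧ X = .tens p r ∧ Y = .tens q r, ?_,
    ⟨P, Q, R, hPQ, hsP, hsQ, hsR, rfl, rfl⟩⟩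
  rintro X Y ⟨p, q, r, hpq, hp, hq, hr, rfl, rfl⟩
  constructor
  · rintro ⟨α, β⟩ X' hstep
    obtain ⟨p', r', a1, a2, b1, b2, rfl, rfl, rfl, h1, h2⟩ :=
      weak_tens_inv hstep p r k l m n rfl hp hr
    obtain ⟨q', hq', hpq'⟩ := (hS p q hpq).1 (_, _) _ (Stmt10Aux.toW h1)
    exact ⟨_, PTerm.Weak.ten (Stmt10Aux.ofW hq') h2, _, _, _, hpq', (weak_sort h1 hp).2.2,
      (weak_sort (Stmt10Aux.ofW hq') hq).2.2, (weak_sort h2 hr).2.2, rfl, rfl⟩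
  · rintro ⟨α, β⟩ Y' hstep
    obtain ⟨q', r', a1, a2, b1, b2, rfl, rfl, rfl, h1, h2⟩ :=
      weak_tens_inv hstep q r k l m n rfl hq hr
    obtain ⟨p', hp', hpq'⟩ := (hS p q hpq).2 (_, _) _ (Stmt10Aux.toW h1)
    exact ⟨_, PTerm.Weak.ten (Stmt10Aux.ofW hp') h2, _, _, _, hpq', (weak_sort (Stmt10Aux.ofW hp') hp).2.2,
      (weak_sort h1 hq).2.2, (weak_sort h2 hr).2.2, rfl, rfl⟩

lemma wb_tens_left {P Q : PTerm} {k l : ℕ}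
    (hsP : PTerm.HasSort P k l) (hsQ : PTerm.HasSort Q k l)
    (h : WBisim P Q) (R : PTerm) {m n : ℕ} (hsR : PTerm.HasSort R m n) :
    WBisim (.tens R P) (.tens R Q) := by
  obtain ⟨S, hS, hPQ⟩ := h
  refine ⟨fun X Y => ∃ r p q, S p q ∧ PTerm.HasSort p k l ∧ PTerm.HasSort q k l ∧
      PTerm.HasSort r m n ∧ X = .tens r p ∧ Y = .tens r q, ?_,
    ⟨R, P, Q, hPQ, hsP, hsQ, hsR, rfl, rfl⟩⟩
  rintro X Y ⟨r, p, q, hpq, hp, hq, hr, rfl, rfl⟩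
  constructor
  · rintro ⟨α, β⟩ X' hstep
    obtain ⟨r', p', a1, a2, b1, b2, rfl, rfl, rfl, h1, h2⟩ :=
      weak_tens_inv hstep r p m n k l rfl hr hp
    obtain ⟨q', hq', hpq'⟩ := (hS p q hpq).1 (_, _) _ (Stmt10Aux.toW h2)
    exact ⟨_, PTerm.Weak.ten h1 (Stmt10Aux.ofW hq'), _, _, _, hpq', (weak_sort h2 hp).2.2,
      (weak_sort (Stmt10Aux.ofW hq') hq).2.2, (weak_sort h1 hr).2.2, rfl, rfl⟩
  · rintro ⟨α, β⟩ Y' hstep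
    obtain ⟨r', q', a1, a2, b1, b2, rfl, rfl, rfl, h1, h2⟩ :=
      weak_tens_inv hstep r q m n k l rfl hr hq
    obtain ⟨p', hp', hpq'⟩ := (hS p q hpq).2 (_, _) _ (Stmt10Aux.toW h2)
    exact ⟨_, PTerm.Weak.ten h1 (Stmt10Aux.ofW hp'), _, _, _, hpq', (weak_sort (Stmt10Aux.ofW hp') hp).2.2,
      (weak_sort h2 hq).2.2, (weak_sort h1 hr).2.2, rfl, rfl⟩

end Stmt10Aux

/-- Proposition `petricongruence`: both strong and weak
bisimilarity of Petri calculus terms are congruences w.r.t. `;` and `⊗`. -/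
theorem stmt10 (P Q : PTerm) (k l : ℕ)
    (hP : PTerm.HasSort P k l) (hQ : PTerm.HasSort Q k l) :
    (SBisim P Q →
       (∀ (R : PTerm) (m : ℕ), PTerm.HasSort R l m →
          SBisim (.seq P R) (.seq Q R)) ∧
       (∀ (R : PTerm) (m : ℕ), PTerm.HasSort R m k →
          SBisim (.seq R P) (.seq R Q)) ∧
       (∀ (R : PTerm) (m n : ℕ), PTerm.HasSort R m n →
          SBisim (.tens P R) (.tens Q R) ∧ SBisim (.tens R P) (.tens R Q))) ∧
    (WBisim P Q →
       (∀ (R : PTerm) (m : ℕ), PTerm.HasSort R l m →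
          WBisim (.seq P R) (.seq Q R)) ∧
       (∀ (R : PTerm) (m : ℕ), PTerm.HasSort R m k →
          WBisim (.seq R P) (.seq R Q)) ∧
       (∀ (R : PTerm) (m n : ℕ), PTerm.HasSort R m n →
          WBisim (.tens P R) (.tens Q R) ∧ WBisim (.tens R P) (.tens R Q))) := by
  refine ⟨fun h => ⟨fun R m _ => Stmt10Aux.sb_seq_right h R,
      fun R m _ => Stmt10Aux.sb_seq_left h R,
      fun R m n _ => ⟨Stmt10Aux.sb_tens_right h R, Stmt10Aux.sb_tens_left h R⟩⟩,
    fun h => ⟨fun R m _ => Stmt10Aux.wb_seq_right h R,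
      fun R m _ => Stmt10Aux.wb_seq_left h R,
      fun R m n hR => ⟨Stmt10Aux.wb_tens_right hP hQ h R hR,
        Stmt10Aux.wb_tens_left hP hQ h R hR⟩⟩⟩
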